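/- arXiv:1012.5512 — 2 statements merged into one kernel-verified Lean document; each statement's English description precedes it below -/
import Mathlib

section
/- Every quasi Radon-Nikodým compact space K is countably lower fragmentable: if some lower semicontinuous quasi metric fragments the compact Hausdorff space K, then there exist bounded sets A_{n,p} ⊆ C(K) (n,p ∈ ℕ) with C(K) = ⋃_{n∈ℕ} A_{n,p} for every p ∈ ℕ, such that the pseudometric d_{A_{n,p}}(x,y) = sup_{f∈A_{n,p}} |f(x) − f(y)| (1/p)-fragments K for all n,p. -/
open Set Topology Cardinal

/-- A map `f : X × X → ℝ` fragments the topological space `X` if for every nonempty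
subset `L` of `X` and every `ε > 0` there is a nonempty relatively open subset of `L`
of `f`-diameter less than `ε`. -/
def Fragments {X : Type*} [TopologicalSpace X] (f : X → X → ℝ) : Prop :=
  ∀ L : Set X, L.Nonempty → ∀ ε : ℝ, 0 < ε →
    ∃ V : Set X, IsOpen V ∧ (V ∩ L).Nonempty ∧
      ∀ x ∈ V ∩ L, ∀ y ∈ V ∩ L, f x y < ε

/-- `f` (defined on the ambient space `X`) fragments the subset `K`. -/
def FragmentsOn {X : Type*} [TopologicalSpace X] (f : X → X → ℝ) (K : Set X) : Prop :=
  ∀ L : Set X, L ⊆ K → L.Nonempty → ∀ ε : ℝ, 0 < ε →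
    ∃ V : Set X, IsOpen V ∧ (V ∩ L).Nonempty ∧
      ∀ x ∈ V ∩ L, ∀ y ∈ V ∩ L, f x y < ε

/-- A quasi metric: nonnegative, symmetric, and vanishing exactly on the diagonal. -/
def IsQuasiMetric {X : Type*} (f : X → X → ℝ) : Prop :=
  (∀ x y, 0 ≤ f x y) ∧ (∀ x y, f x y = f y x) ∧ (∀ x y, f x y = 0 ↔ x = y)

/-- A metric (as a two-variable real function): symmetric, vanishing exactly on the
diagonal, and satisfying the triangle inequality. -/
def IsMetricFun {X : Type*} (d : X → X → ℝ) : Prop :=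
  (∀ x y, d x y = d y x) ∧ (∀ x y, d x y = 0 ↔ x = y) ∧
    (∀ x y z, d x z ≤ d x y + d y z)

/-- Lower semicontinuity of a two-variable map for the product topology. -/
def LSC {X : Type*} [TopologicalSpace X] (f : X → X → ℝ) : Prop :=
  LowerSemicontinuous (fun p : X × X => f p.1 p.2)

/-- `d` Δ-fragments `X`: every nonempty subset has a nonempty relatively open subset of
`d`-diameter at most `Δ`. -/
def DeltaFragments {X : Type*} [TopologicalSpace X] (d : X → X → ℝ) (Δ : ℝ) : Prop :=
  ∀ L : Set X, L.Nonempty →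
    ∃ V : Set X, IsOpen V ∧ (V ∩ L).Nonempty ∧
      ∀ x ∈ V ∩ L, ∀ y ∈ V ∩ L, d x y ≤ Δ

/-- The pseudometric on `K` induced by a bounded set `A` of continuous functions:
`d_A(x,y) = sup_{f ∈ A} |f(x) - f(y)|`. -/
noncomputable def dC {K : Type*} [TopologicalSpace K] (A : Set (ContinuousMap K ℝ))
    (x y : K) : ℝ :=
  ⨆ f : A, |(f : ContinuousMap K ℝ) x - (f : ContinuousMap K ℝ) y|

/-- Every quasi Radon-Nikodým compact space is countably lower fragmentable. -/
theorem statement15 {K : Type*} [TopologicalSpace K] [CompactSpace K] [T2Space K]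
    (hqRN : ∃ f : K → K → ℝ, IsQuasiMetric f ∧ LSC f ∧ Fragments f) :
    ∃ A : ℕ → ℕ → Set (ContinuousMap K ℝ),
      (∀ n p, 0 < p → Bornology.IsBounded (A n p)) ∧
      (∀ p, 0 < p → (⋃ n, A n p) = Set.univ) ∧
      (∀ n p, 0 < p → DeltaFragments (dC (A n p)) ((p : ℝ)⁻¹)) := by
  obtain ⟨f, ⟨hf0, hfs, hfd⟩, hlsc, hfrag⟩ := hqRN
  refine ⟨fun n p => {g : ContinuousMap K ℝ | ‖g‖ ≤ n ∧
      ∀ x y, |g x - g y| ≤ n * f x y + (2 * p : ℝ)⁻¹}, ?_, ?_, ?_⟩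
  · intro n p _
    refine (Metric.isBounded_closedBall (x := (0 : ContinuousMap K ℝ)) (r := n)).subset ?_
    intro g hg
    simpa [Metric.mem_closedBall, dist_zero_right] using hg.1
  · intro p hp
    rw [Set.eq_univ_iff_forall]
    intro g
    have hc : (0 : ℝ) < (2 * p : ℝ)⁻¹ := by positivity
    -- key claim: ∃ n, ∀ x y, |g x - g y| ≤ n * f x y + (2p)⁻¹
    have key : ∃ n : ℕ, ∀ x y, |g x - g y| ≤ n * f x y + (2 * p : ℝ)⁻¹ := by
      by_contra h
      push_neg at h
      set S : ℕ → Set (K × K) := fun n =>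
        {q | (n : ℝ) * f q.1 q.2 + (2 * p : ℝ)⁻¹ ≤ |g q.1 - g q.2|} with hS
      have hclosed : ∀ n, IsClosed (S n) := by
        intro n
        have h1 : LowerSemicontinuous (fun q : K × K =>
            (n : ℝ) * f q.1 q.2 + (2 * p : ℝ)⁻¹ - |g q.1 - g q.2|) := by
          have hmul : LowerSemicontinuous (fun q : K × K => (n : ℝ) * f q.1 q.2) :=
            (continuous_const.mul continuous_id).comp_lowerSemicontinuous hlsc
              (fun a b hab => by simpa using mul_le_mul_of_nonneg_left hab (by positivity : (0:ℝ) ≤ n))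
          have hcont : Continuous (fun q : K × K => (2 * p : ℝ)⁻¹ - |g q.1 - g q.2|) := by
            continuity
          have := hmul.add hcont.lowerSemicontinuous
          convert this using 2 with q
          · rfl
          ring
        have : S n = (fun q : K × K =>
            (n : ℝ) * f q.1 q.2 + (2 * p : ℝ)⁻¹ - |g q.1 - g q.2|) ⁻¹' Set.Iic 0 := by
          ext q
          simp only [hS, Set.mem_setOf_eq, Set.mem_preimage, Set.mem_Iic, sub_nonpos,
            sub_le_iff_le_add, zero_add]
        rw [this]
        exact h1.isClosed_preimage 0
      have hne : ∀ n, (S n).Nonempty := by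
        intro n
        obtain ⟨x, y, hxy⟩ := h n
        exact ⟨(x, y), le_of_lt hxy⟩
      have hanti : ∀ n, S (n + 1) ⊆ S n := by
        intro n q hq
        simp only [hS, Set.mem_setOf_eq] at hq ⊢
        have : (n : ℝ) * f q.1 q.2 ≤ ((n + 1 : ℕ) : ℝ) * f q.1 q.2 := by
          apply mul_le_mul_of_nonneg_right _ (hf0 _ _)
          push_cast; linarith
        linarith
      obtain ⟨q, hq⟩ := IsCompact.nonempty_iInter_of_sequence_nonempty_isCompact_isClosed
        S hanti hne ((hclosed 0).isCompact) hclosed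
      have hq' : ∀ n : ℕ, (n : ℝ) * f q.1 q.2 + (2 * p : ℝ)⁻¹ ≤ |g q.1 - g q.2| := by
        intro n
        have := Set.mem_iInter.1 hq n
        simpa [hS] using this
      rcases eq_or_lt_of_le (hf0 q.1 q.2) with hzero | hpos
      · have : q.1 = q.2 := (hfd q.1 q.2).1 hzero.symm
        have h0 := hq' 0
        rw [this] at h0
        simp at h0
        have : (0:ℝ) < ((p:ℝ))⁻¹ * 2⁻¹ := by positivity
        linarith
      · obtain ⟨n, hn⟩ := exists_nat_gt (|g q.1 - g q.2| / f q.1 q.2)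
        have : |g q.1 - g q.2| < (n : ℝ) * f q.1 q.2 := by
          rw [div_lt_iff₀ hpos] at hn; linarith
        have := hq' n
        linarith
    obtain ⟨n, hn⟩ := key
    refine Set.mem_iUnion.2 ⟨max n ⌈‖g‖⌉₊, ?_, ?_⟩
    · exact le_trans (Nat.le_ceil _) (by exact_mod_cast Nat.cast_le.2 (le_max_right n _))
    · intro x y
      refine (hn x y).trans ?_
      have : (n : ℝ) * f x y ≤ ((max n ⌈‖g‖⌉₊ : ℕ) : ℝ) * f x y :=
        mul_le_mul_of_nonneg_right (by exact_mod_cast le_max_left n _) (hf0 x y)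
      linarith
  · intro n p hp L hL
    have hp' : (0 : ℝ) < p := by exact_mod_cast hp
    have hε : (0 : ℝ) < (2 * p * (n + 1) : ℝ)⁻¹ := by positivity
    obtain ⟨V, hVopen, hVne, hVsmall⟩ := hfrag L hL _ hε
    refine ⟨V, hVopen, hVne, ?_⟩
    intro x hx y hy
    apply Real.iSup_le _ (by positivity)
    rintro ⟨g, hg1, hg2⟩
    have h1 : |g x - g y| ≤ n * f x y + (2 * p : ℝ)⁻¹ := hg2 x y
    have h2 : f x y < (2 * p * (n + 1) : ℝ)⁻¹ := hVsmall x hx y hy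
    have h3 : (n : ℝ) * f x y ≤ (n : ℝ) * (2 * p * (n + 1) : ℝ)⁻¹ :=
      mul_le_mul_of_nonneg_left h2.le (by positivity)
    have h4 : (n : ℝ) * (2 * p * (n + 1) : ℝ)⁻¹ ≤ (2 * p : ℝ)⁻¹ := by
      have hn1 : (0:ℝ) < (n:ℝ) + 1 := by positivity
      have heq : (n : ℝ) * (2 * p * (n + 1) : ℝ)⁻¹ = ((n:ℝ)/((n:ℝ)+1)) * (2 * p : ℝ)⁻¹ := by
        rw [mul_inv, div_eq_mul_inv]; ring
      rw [heq]
      exact mul_le_of_le_one_left (by positivity) (by rw [div_le_one hn1]; linarith)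
    have h5 : (2 * p : ℝ)⁻¹ + (2 * p : ℝ)⁻¹ = (p : ℝ)⁻¹ := by
      rw [← two_mul, mul_inv, ← mul_assoc, mul_inv_cancel₀ two_ne_zero, one_mul]
    calc |g x - g y| ≤ n * f x y + (2 * p : ℝ)⁻¹ := h1
      _ ≤ (2 * p : ℝ)⁻¹ + (2 * p : ℝ)⁻¹ := by linarith
      _ = (p : ℝ)⁻¹ := h5
end

section
/- Let K be a compact subset of the cube [0,1]^Γ and suppose there are subsets Γ_{n,p} ⊆ Γ (n,p ∈ ℕ) such that ⋃_{n∈ℕ} Γ_{n,p} = Γ for every p ∈ ℕ and the pseudometric d_{Γ_{n,p}} (1/p)-fragments K for every n,p ∈ ℕ. Then K is quasi Radon-Nikodým compact: there exists a lower semicontinuous quasi metric on K which fragments K. -/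
open Set Topology Cardinal

/-- The pseudometric `d_A` on `[0,1]^Γ` given by `d_A(x,y) = sup_{γ ∈ A} |x_γ - y_γ|`. -/
noncomputable def dGamma {Γ : Type*} (A : Set Γ) (x y : Γ → ℝ) : ℝ :=
  ⨆ γ : A, |x γ - y γ|

/-- `f` (defined on the ambient space) Δ-fragments the subset `K`. -/
def DeltaFragmentsOn {X : Type*} [TopologicalSpace X] (f : X → X → ℝ) (K : Set X)
    (Δ : ℝ) : Prop :=
  ∀ L : Set X, L ⊆ K → L.Nonempty →
    ∃ V : Set X, IsOpen V ∧ (V ∩ L).Nonempty ∧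
      ∀ x ∈ V ∩ L, ∀ y ∈ V ∩ L, f x y ≤ Δ


noncomputable section QRNAux

variable {Γ : Type*}

/-- truncated excess function -/
def qrnPhi (p : ℕ) (t : ℝ) : ℝ := min (max (t - (p : ℝ)⁻¹) 0) 1

lemma qrnPhi_nonneg (p : ℕ) (t : ℝ) : 0 ≤ qrnPhi p t :=
  le_min (le_max_right _ _) zero_le_one

lemma qrnPhi_le_one (p : ℕ) (t : ℝ) : qrnPhi p t ≤ 1 := min_le_right _ _

lemma qrnPhi_continuous (p : ℕ) : Continuous (qrnPhi p) := by
  unfold qrnPhi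
  fun_prop

lemma qrnPhi_eq_zero {p : ℕ} {t : ℝ} (h : t ≤ (p : ℝ)⁻¹) : qrnPhi p t = 0 := by
  have : max (t - (p : ℝ)⁻¹) 0 = 0 := max_eq_right (by linarith)
  simp [qrnPhi, this]

lemma qrnPhi_pos {p : ℕ} {t : ℝ} (h : (p : ℝ)⁻¹ < t) : 0 < qrnPhi p t :=
  lt_min (lt_max_of_lt_left (by linarith)) one_pos

/-- the basic sup function -/
def qrnS (A : Set Γ) (p : ℕ) (x y : Γ → ℝ) : ℝ := ⨆ γ : A, qrnPhi p (|x γ - y γ|)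

lemma qrnS_nonneg (A : Set Γ) (p : ℕ) (x y : Γ → ℝ) : 0 ≤ qrnS A p x y :=
  Real.iSup_nonneg fun γ => qrnPhi_nonneg _ _

lemma qrnS_le_one (A : Set Γ) (p : ℕ) (x y : Γ → ℝ) : qrnS A p x y ≤ 1 :=
  Real.iSup_le (fun γ => qrnPhi_le_one _ _) zero_le_one

lemma qrnS_symm (A : Set Γ) (p : ℕ) (x y : Γ → ℝ) : qrnS A p x y = qrnS A p y x := by
  unfold qrnS
  congr 1; funext γ; rw [abs_sub_comm]

lemma qrnS_self (A : Set Γ) (p : ℕ) (x : Γ → ℝ) : qrnS A p x x = 0 := by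
  refine le_antisymm (Real.iSup_le (fun γ => ?_) le_rfl) (qrnS_nonneg _ _ _ _)
  rw [qrnPhi_eq_zero (t := |x ↑γ - x ↑γ|) (by simp)]

lemma qrnS_bddAbove (A : Set Γ) (p : ℕ) (x y : Γ → ℝ) :
    BddAbove (Set.range fun γ : A => qrnPhi p (|x γ - y γ|)) :=
  ⟨1, by rintro _ ⟨γ, rfl⟩; exact qrnPhi_le_one _ _⟩

lemma le_qrnS (A : Set Γ) (p : ℕ) (x y : Γ → ℝ) (γ : A) :
    qrnPhi p (|x γ - y γ|) ≤ qrnS A p x y :=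
  le_ciSup (qrnS_bddAbove A p x y) γ

lemma qrnS_lsc (A : Set Γ) (p : ℕ) :
    LowerSemicontinuous (fun q : (Γ → ℝ) × (Γ → ℝ) => qrnS A p q.1 q.2) := by
  intro q c hc
  rcases lt_or_ge c 0 with h | h
  · exact Filter.Eventually.of_forall fun y => h.trans_le (qrnS_nonneg _ _ _ _)
  · have hA : Nonempty A := by
      by_contra hne
      rw [not_nonempty_iff] at hne
      have : qrnS A p q.1 q.2 = 0 := Real.iSup_of_isEmpty _
      simp only [qrnS] at hc this
      rw [this] at hc
      exact absurd hc (not_lt.2 h)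
    obtain ⟨γ, hγ⟩ := exists_lt_of_lt_ciSup hc
    have hcont : Continuous (fun q : (Γ → ℝ) × (Γ → ℝ) => qrnPhi p (|q.1 γ - q.2 γ|)) := by
      apply (qrnPhi_continuous p).comp
      exact ((continuous_apply (γ : Γ)).comp continuous_fst).sub
        ((continuous_apply (γ : Γ)).comp continuous_snd) |>.abs
    have hopen : IsOpen {w : (Γ → ℝ) × (Γ → ℝ) | c < qrnPhi p (|w.1 γ - w.2 γ|)} :=
      isOpen_lt continuous_const hcont
    filter_upwards [hopen.mem_nhds hγ] with w hw
    exact hw.trans_le (le_qrnS A p w.1 w.2 γ)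

/-- if all relevant coordinates are within 1/p then qrnS vanishes -/
lemma qrnS_eq_zero {A : Set Γ} {p : ℕ} {x y : Γ → ℝ}
    (h : ∀ γ ∈ A, |x γ - y γ| ≤ (p : ℝ)⁻¹) : qrnS A p x y = 0 := by
  refine le_antisymm (Real.iSup_le (fun γ => ?_) le_rfl) (qrnS_nonneg _ _ _ _)
  rw [qrnPhi_eq_zero (h γ γ.2)]

/-- weights -/
def qrnW (q : ℕ × ℕ) : ℝ := (2 : ℝ)⁻¹ ^ q.1 * ((2 : ℝ)⁻¹ ^ q.2 * (2 : ℝ)⁻¹)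

lemma qrnW_pos (q : ℕ × ℕ) : 0 < qrnW q := by unfold qrnW; positivity

lemma qrnW_summable : Summable qrnW := by
  have h : Summable (fun n : ℕ => (2 : ℝ)⁻¹ ^ n) :=
    summable_geometric_of_lt_one (by norm_num) (by norm_num)
  have := Summable.mul_of_nonneg h (h.mul_right (2:ℝ)⁻¹)
    (fun n => by positivity) (fun n => by positivity)
  exact this


lemma qrn_lsc_finsum {X ι : Type*} [TopologicalSpace X] {g : ι → X → ℝ}
    (hg : ∀ i, LowerSemicontinuous (g i)) (s : Finset ι) :
    LowerSemicontinuous fun y => ∑ i ∈ s, g i y := by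
  classical
  induction s using Finset.induction_on with
  | empty => simpa using lowerSemicontinuous_const
  | insert _ _ hnot ih =>
    simp_rw [Finset.sum_insert hnot]
    exact (hg _).add ih

lemma qrn_lsc_tsum {X ι : Type*} [TopologicalSpace X] {g : ι → X → ℝ} {c : ι → ℝ}
    (hg : ∀ i, LowerSemicontinuous (g i)) (h0 : ∀ i x, 0 ≤ g i x)
    (hle : ∀ i x, g i x ≤ c i) (hc : Summable c) :
    LowerSemicontinuous fun x => ∑' i, g i x := by
  intro x v hv
  have hsum : ∀ y, Summable fun i => g i y :=
    fun y => hc.of_nonneg_of_le (fun i => h0 i y) (fun i => hle i y)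
  obtain ⟨s, hs⟩ : ∃ s : Finset ι, v < ∑ i ∈ s, g i x := by
    have h1 : HasSum (fun i => g i x) (∑' i, g i x) := (hsum x).hasSum
    exact (h1.eventually (lt_mem_nhds hv)).exists
  filter_upwards [qrn_lsc_finsum hg s x v hs] with y hy
  exact hy.trans_le (Summable.sum_le_tsum s (fun i _ => h0 i y) (hsum y))

lemma qrn_lsc_const_mul {X : Type*} [TopologicalSpace X] {f : X → ℝ} {c : ℝ}
    (hf : LowerSemicontinuous f) (hc : 0 < c) :
    LowerSemicontinuous fun x => c * f x := by
  intro x v hv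
  have h : v / c < f x := (div_lt_iff₀' hc).2 hv
  filter_upwards [hf x _ h] with y hy
  exact (div_lt_iff₀' hc).1 hy

/-- the quasi metric on the ambient space -/
def qrnF (B : ℕ × ℕ → Set Γ) (x y : Γ → ℝ) : ℝ :=
  ∑' q : ℕ × ℕ, qrnW q * qrnS (B q) (q.2 + 1) x y

lemma qrnF_term_nonneg (B : ℕ × ℕ → Set Γ) (x y : Γ → ℝ) (q : ℕ × ℕ) :
    0 ≤ qrnW q * qrnS (B q) (q.2 + 1) x y :=
  mul_nonneg (qrnW_pos q).le (qrnS_nonneg _ _ _ _)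

lemma qrnF_term_le (B : ℕ × ℕ → Set Γ) (x y : Γ → ℝ) (q : ℕ × ℕ) :
    qrnW q * qrnS (B q) (q.2 + 1) x y ≤ qrnW q := by
  nth_rewrite 2 [← mul_one (qrnW q)]
  exact mul_le_mul_of_nonneg_left (qrnS_le_one _ _ _ _) (qrnW_pos q).le

lemma qrnF_summable (B : ℕ × ℕ → Set Γ) (x y : Γ → ℝ) :
    Summable fun q : ℕ × ℕ => qrnW q * qrnS (B q) (q.2 + 1) x y :=
  qrnW_summable.of_nonneg_of_le (qrnF_term_nonneg B x y) (qrnF_term_le B x y)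

lemma qrnF_nonneg (B : ℕ × ℕ → Set Γ) (x y : Γ → ℝ) : 0 ≤ qrnF B x y :=
  tsum_nonneg (qrnF_term_nonneg B x y)

lemma qrnF_symm (B : ℕ × ℕ → Set Γ) (x y : Γ → ℝ) : qrnF B x y = qrnF B y x := by
  unfold qrnF
  congr 1; funext q; rw [qrnS_symm]

lemma qrnF_self (B : ℕ × ℕ → Set Γ) (x : Γ → ℝ) : qrnF B x x = 0 := by
  unfold qrnF
  have : ∀ q : ℕ × ℕ, qrnW q * qrnS (B q) (q.2 + 1) x x = 0 := by
    intro q; rw [qrnS_self, mul_zero]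
  simp [this]

lemma qrnF_lsc (B : ℕ × ℕ → Set Γ) :
    LowerSemicontinuous (fun w : (Γ → ℝ) × (Γ → ℝ) => qrnF B w.1 w.2) :=
  qrn_lsc_tsum (g := fun q (w : (Γ → ℝ) × (Γ → ℝ)) => qrnW q * qrnS (B q) (q.2 + 1) w.1 w.2)
    (c := qrnW)
    (fun q => qrn_lsc_const_mul (qrnS_lsc (B q) (q.2 + 1)) (qrnW_pos q))
    (fun q w => qrnF_term_nonneg B w.1 w.2 q)
    (fun q w => qrnF_term_le B w.1 w.2 q) qrnW_summable

/-- positivity when some coordinate differs -/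
lemma qrnF_pos (B : ℕ × ℕ → Set Γ) {x y : Γ → ℝ} {γ : Γ} (hxy : x γ ≠ y γ)
    (hB : ∀ p : ℕ, ∃ n, γ ∈ B (n, p)) : 0 < qrnF B x y := by
  have hδ : 0 < |x γ - y γ| := abs_pos.2 (sub_ne_zero.2 hxy)
  obtain ⟨p, hp⟩ := exists_nat_one_div_lt hδ
  obtain ⟨n, hn⟩ := hB p
  have hterm : 0 < qrnW (n, p) * qrnS (B (n, p)) (p + 1) x y := by
    apply mul_pos (qrnW_pos _)
    have h1 : ((p + 1 : ℕ) : ℝ)⁻¹ < |x γ - y γ| := by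
      rw [← one_div]; push_cast; exact hp
    calc (0:ℝ) < qrnPhi (p + 1) (|x γ - y γ|) := qrnPhi_pos h1
      _ ≤ qrnS (B (n, p)) (p + 1) x y := le_qrnS _ _ _ _ ⟨γ, hn⟩
  exact hterm.trans_le (Summable.le_tsum (qrnF_summable B x y) (n, p)
    (fun q _ => qrnF_term_nonneg B x y q))

end QRNAux

/-- If `K ⊆ [0,1]^Γ` is compact and there are `Γ_{n,p} ⊆ Γ` with `⋃_n Γ_{n,p} = Γ` for each
`p` and `d_{Γ_{n,p}}` (1/p)-fragmenting `K`, then `K` is quasi Radon-Nikodým compact. -/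
theorem statement16 {Γ : Type*} (K : Set (Γ → ℝ))
    (hcube : ∀ x ∈ K, ∀ γ, x γ ∈ Set.Icc (0 : ℝ) 1) (hcomp : IsCompact K)
    (Γnp : ℕ → ℕ → Set Γ)
    (hcover : ∀ p, 0 < p → (⋃ n, Γnp n p) = Set.univ)
    (hfrag : ∀ n p, 0 < p → DeltaFragmentsOn (dGamma (Γnp n p)) K ((p : ℝ)⁻¹)) :
    ∃ f : K → K → ℝ, IsQuasiMetric f ∧ LSC f ∧ Fragments f := by
  classical
  set B : ℕ × ℕ → Set Γ := fun q => Γnp q.1 (q.2 + 1) with hBdef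
  refine ⟨fun x y => qrnF B x y,
    ⟨fun x y => qrnF_nonneg B x y, fun x y => qrnF_symm B x y, ?_⟩, ?_, ?_⟩
  · -- vanishes exactly on the diagonal
    intro x y
    constructor
    · intro h
      by_contra hxy
      have hne : (x : Γ → ℝ) ≠ (y : Γ → ℝ) := fun he => hxy (Subtype.ext he)
      obtain ⟨γ, hγ⟩ : ∃ γ, (x : Γ → ℝ) γ ≠ (y : Γ → ℝ) γ := by
        by_contra hall; push_neg at hall; exact hne (funext hall)
      have hBγ : ∀ p : ℕ, ∃ n, γ ∈ B (n, p) := by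
        intro p
        have hu := hcover (p + 1) (Nat.succ_pos p)
        have hγu : γ ∈ ⋃ n, Γnp n (p + 1) := hu ▸ Set.mem_univ γ
        simpa [hBdef] using hγu
      exact absurd h (qrnF_pos B hγ hBγ).ne'
    · rintro rfl; exact qrnF_self B x
  · -- lower semicontinuity
    intro w c hc
    have hcont : Continuous (fun w : ↥K × ↥K => ((w.1 : Γ → ℝ), (w.2 : Γ → ℝ))) :=
      (continuous_subtype_val.comp continuous_fst).prodMk
        (continuous_subtype_val.comp continuous_snd)
    exact (hcont.tendsto w).eventually (qrnF_lsc B _ c hc)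
  · -- fragmentation
    intro L hL ε hε
    set L' : Set (Γ → ℝ) := Subtype.val '' L with hL'def
    have hL'K : L' ⊆ K := Subtype.coe_image_subset K L
    have hL' : L'.Nonempty := hL.image _
    -- a finset with small tail
    obtain ⟨s, hs⟩ : ∃ s : Finset (ℕ × ℕ),
        ∑' q : ↑((s : Set (ℕ × ℕ))ᶜ), qrnW ↑q < ε := by
      have h1 : HasSum qrnW (∑' q, qrnW q) := qrnW_summable.hasSum
      have h2 : ∀ᶠ t : Finset (ℕ × ℕ) in Filter.atTop,
          (∑' q, qrnW q) - ε < ∑ q ∈ t, qrnW q :=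
        h1.eventually (lt_mem_nhds (by linarith))
      obtain ⟨t, ht⟩ := h2.exists
      refine ⟨t, ?_⟩
      have h3 := Summable.sum_add_tsum_compl (s := t) qrnW_summable
      have : (∑' q : ↑((t : Set (ℕ × ℕ))ᶜ), qrnW ↑q : ℝ)
          = (∑' q, qrnW q) - ∑ q ∈ t, qrnW q := by
        rw [eq_sub_iff_add_eq, add_comm]
        simpa using h3
      rw [this]; linarith
    -- iterated fragmentation over the finset s
    have key : ∀ (t : Finset (ℕ × ℕ)) (M : Set (Γ → ℝ)), M ⊆ K → M.Nonempty →
        ∃ V : Set (Γ → ℝ), IsOpen V ∧ (V ∩ M).Nonempty ∧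
          ∀ q ∈ t, ∀ x ∈ V ∩ M, ∀ y ∈ V ∩ M,
            dGamma (B q) x y ≤ ((q.2 + 1 : ℕ) : ℝ)⁻¹ := by
      intro t
      induction t using Finset.induction_on with
      | empty =>
        intro M hMK hM
        exact ⟨Set.univ, isOpen_univ, by simpa using hM, by simp⟩
      | @insert q t hq ih =>
        intro M hMK hM
        obtain ⟨V, hVopen, hVne, hVbd⟩ := ih M hMK hM
        obtain ⟨W, hWopen, hWne, hWbd⟩ := hfrag q.1 (q.2 + 1) (Nat.succ_pos _) (V ∩ M)
          (Set.inter_subset_right.trans hMK) hVne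
        refine ⟨W ∩ V, hWopen.inter hVopen, ?_, ?_⟩
        · obtain ⟨z, hz⟩ := hWne
          exact ⟨z, ⟨hz.1, hz.2.1⟩, hz.2.2⟩
        · intro q' hq' x hx y hy
          rcases Finset.mem_insert.1 hq' with rfl | hq'
          · have hb := hWbd x ⟨hx.1.1, hx.1.2, hx.2⟩ y ⟨hy.1.1, hy.1.2, hy.2⟩
            exact_mod_cast hb
          · exact hVbd q' hq' x ⟨hx.1.2, hx.2⟩ y ⟨hy.1.2, hy.2⟩
    obtain ⟨V, hVopen, hVne, hVbd⟩ := key s L' hL'K hL'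
    refine ⟨Subtype.val ⁻¹' V, hVopen.preimage continuous_subtype_val, ?_, ?_⟩
    · obtain ⟨z, hzV, w, hwL, hwz⟩ := hVne
      exact ⟨w, show (w : Γ → ℝ) ∈ V from hwz ▸ hzV, hwL⟩
    · intro x hx y hy
      have hx' : (x : Γ → ℝ) ∈ V ∩ L' := ⟨hx.1, Set.mem_image_of_mem _ hx.2⟩
      have hy' : (y : Γ → ℝ) ∈ V ∩ L' := ⟨hy.1, Set.mem_image_of_mem _ hy.2⟩
      have hxK : (x : Γ → ℝ) ∈ K := x.2
      have hyK : (y : Γ → ℝ) ∈ K := y.2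
      -- each term indexed by s vanishes
      have hzero : ∀ q ∈ s, qrnS (B q) (q.2 + 1) (x : Γ → ℝ) (y : Γ → ℝ) = 0 := by
        intro q hqs
        apply qrnS_eq_zero
        intro γ hγ
        have hbdd : BddAbove (Set.range fun γ : B q => |(x : Γ → ℝ) γ - (y : Γ → ℝ) γ|) := by
          refine ⟨2, ?_⟩
          rintro _ ⟨δ, rfl⟩
          have h1 := hcube _ hxK δ
          have h2 := hcube _ hyK δ
          rw [Set.mem_Icc] at h1 h2
          rw [abs_le]; constructor <;> linarith
        have hle : |(x : Γ → ℝ) γ - (y : Γ → ℝ) γ|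
            ≤ dGamma (B q) (x : Γ → ℝ) (y : Γ → ℝ) := le_ciSup hbdd ⟨γ, hγ⟩
        exact hle.trans (hVbd q hqs _ hx' _ hy')
      -- the split of the sum
      have hsum := qrnF_summable B (x : Γ → ℝ) (y : Γ → ℝ)
      have hsplit := Summable.sum_add_tsum_compl (s := s) hsum
      have hsum0 : ∑ q ∈ s, qrnW q * qrnS (B q) (q.2 + 1) (x : Γ → ℝ) (y : Γ → ℝ) = 0 :=
        Finset.sum_eq_zero fun q hqs => by rw [hzero q hqs, mul_zero]
      have htail : (∑' q : ↑((s : Set (ℕ × ℕ))ᶜ),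
            qrnW (q : ℕ × ℕ) * qrnS (B (q : ℕ × ℕ)) ((q : ℕ × ℕ).2 + 1) (x : Γ → ℝ) (y : Γ → ℝ))
          ≤ ∑' q : ↑((s : Set (ℕ × ℕ))ᶜ), qrnW (q : ℕ × ℕ) := by
        apply Summable.tsum_le_tsum
        · intro q; exact qrnF_term_le B _ _ _
        · exact hsum.subtype _
        · exact qrnW_summable.subtype _
      have : qrnF B (x : Γ → ℝ) (y : Γ → ℝ)
          = ∑' q : ↑((s : Set (ℕ × ℕ))ᶜ),
              qrnW (q : ℕ × ℕ) * qrnS (B (q : ℕ × ℕ)) ((q : ℕ × ℕ).2 + 1) (x : Γ → ℝ) (y : Γ → ℝ) := by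
        rw [qrnF, ← hsplit, hsum0, zero_add]
      show qrnF B (x : Γ → ℝ) (y : Γ → ℝ) < ε
      rw [this]
      exact htail.trans_lt hs
end
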